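/- The number of special k-partitions of length q equals the binomial coefficient C(q+k−1, k−1). -/

import Mathlib

lemma gapCount : ∀ n q : ℕ,
    ((Finset.range n).powerset.filter
      (fun s => s.card = q ∧ ∀ a ∈ s, ∀ b ∈ s, a < b → a + 2 ≤ b)).card
    = (n + 1 - q).choose q := by
  intro n
  induction n using Nat.strong_induction_on with
  | _ n ih =>
    match n with
    | 0 =>
      intro q
      rcases q with _ | q
      · decide
      · simp only [Finset.range_zero, Finset.powerset_empty]
        rw [Finset.filter_eq_empty_iff.2 (by rintro s hs; simp at hs; subst hs; simp)]
        simp [Nat.choose_eq_zero_of_lt]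
    | 1 =>
      intro q
      rcases q with _ | q
      · decide
      · rcases q with _ | q
        · decide
        · rw [Finset.filter_eq_empty_iff.2]
          · simp [Nat.choose_eq_zero_of_lt]
          · intro s hs
            simp only [Finset.mem_powerset, Finset.range_one,
              Finset.subset_singleton_iff] at hs
            rcases hs with rfl | rfl <;> simp
    | (m+2) =>
      intro q
      rcases q with _ | q
      · -- q = 0 : only the empty set
        have : ((Finset.range (m+2)).powerset.filter
            (fun s => s.card = 0 ∧ ∀ a ∈ s, ∀ b ∈ s, a < b → a + 2 ≤ b)) = {∅} := by
          ext s
          simp only [Finset.mem_filter, Finset.mem_powerset, Finset.card_eq_zero,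
            Finset.mem_singleton]
          constructor
          · rintro ⟨_, h, _⟩; exact h
          · rintro rfl; exact ⟨by simp, rfl, by simp⟩
        rw [this]
        simp
      · -- split on whether m+1 ∈ s
        set P : Finset ℕ → Prop := fun s => s.card = q + 1 ∧ ∀ a ∈ s, ∀ b ∈ s, a < b → a + 2 ≤ b with hP
        classical
        set F := (Finset.range (m+2)).powerset.filter P with hF
        have hsplit := Finset.card_filter_add_card_filter_not
          (s := F) (p := fun s => (m+1) ∈ s)
        have h1 : F.filter (fun s => (m+1) ∉ s)
            = (Finset.range (m+1)).powerset.filter P := by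
          ext s
          simp only [hF, Finset.mem_filter, Finset.mem_powerset, Finset.subset_iff,
            Finset.mem_range]
          constructor
          · rintro ⟨⟨hsub, hp⟩, hnm⟩
            refine ⟨fun x hx => ?_, hp⟩
            have := hsub hx
            have : x ≠ m+1 := fun h => hnm (h ▸ hx)
            omega
          · rintro ⟨hsub, hp⟩
            refine ⟨⟨fun x hx => by have := hsub hx; omega, hp⟩, fun hm => by
              have := hsub hm; omega⟩
        have h2 : (F.filter (fun s => (m+1) ∈ s)).card
            = ((Finset.range m).powerset.filter
                (fun t => t.card = q ∧ ∀ a ∈ t, ∀ b ∈ t, a < b → a + 2 ≤ b)).card := by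
          apply Finset.card_nbij' (i := fun s => s.erase (m+1)) (j := fun t => insert (m+1) t)
          · -- forward maps into target
            intro s hs
            simp only [hF, hP, Finset.mem_coe, Finset.mem_filter, Finset.mem_powerset] at hs ⊢
            obtain ⟨⟨hsub, hcard, hgap⟩, hmem⟩ := hs
            refine ⟨?_, ?_, ?_⟩
            · intro x hx
              have hxs := Finset.mem_of_mem_erase hx
              have hxne := Finset.ne_of_mem_erase hx
              have hxlt : x < m + 2 := Finset.mem_range.1 (hsub hxs)
              have : x < m + 1 := lt_of_le_of_ne (by omega) hxne
              rcases lt_or_ge x (m+1) with h | h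
              · have := hgap x hxs (m+1) hmem h
                exact Finset.mem_range.2 (by omega)
              · omega
            · rw [Finset.card_erase_of_mem hmem, hcard]
              omega
            · intro a ha b hb hab
              exact hgap a (Finset.mem_of_mem_erase ha) b (Finset.mem_of_mem_erase hb) hab
          · -- backward maps into source
            intro t ht
            simp only [hF, hP, Finset.mem_coe, Finset.mem_filter, Finset.mem_powerset] at ht ⊢
            obtain ⟨hsub, hcard, hgap⟩ := ht
            have hnt : (m+1) ∉ t := fun h => by
              have := Finset.mem_range.1 (hsub h); omega
            refine ⟨⟨?_, ?_, ?_⟩, Finset.mem_insert_self _ _⟩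
            · intro x hx
              rcases Finset.mem_insert.1 hx with rfl | hx
              · exact Finset.mem_range.2 (by omega)
              · exact Finset.mem_range.2 (by have := Finset.mem_range.1 (hsub hx); omega)
            · rw [Finset.card_insert_of_notMem hnt, hcard]
            · intro a ha b hb hab
              rcases Finset.mem_insert.1 ha with rfl | ha <;>
                rcases Finset.mem_insert.1 hb with rfl | hb
              · omega
              · have := Finset.mem_range.1 (hsub hb); omega
              · have := Finset.mem_range.1 (hsub ha); omega
              · exact hgap a ha b hb hab
          · -- left inverse
            intro s hs
            simp only [hF, Finset.mem_coe, Finset.mem_filter] at hs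
            exact Finset.insert_erase hs.2
          · -- right inverse
            intro t ht
            simp only [Finset.mem_coe, Finset.mem_filter, Finset.mem_powerset] at ht
            have hnt : (m+1) ∉ t := fun h => by
              have := Finset.mem_range.1 (ht.1 h); omega
            exact Finset.erase_insert hnt
        rw [← hsplit, h1, h2, ih (m+1) (by omega) (q+1), ih m (by omega) q]
        rcases le_or_gt q (m+1) with h | h
        · have e1 : m + 1 + 1 - (q + 1) = m + 1 - q := by omega
          have e2 : m + 2 + 1 - (q + 1) = (m + 1 - q) + 1 := by omega
          rw [e1, e2, Nat.choose_succ_succ]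
        · have e1 : m + 1 + 1 - (q + 1) < q + 1 := by omega
          have e2 : m + 2 + 1 - (q + 1) < q + 1 := by omega
          have e3 : m + 1 - q < q := by omega
          rw [Nat.choose_eq_zero_of_lt e1, Nat.choose_eq_zero_of_lt e2,
            Nat.choose_eq_zero_of_lt e3]


/-- for integers `k ≥ 1` and `q ≥ 0`, the number of special
`k`-partitions of length `q` — i.e. finite sets `s` of integers of cardinality `q`
with all elements `≥ k`, any two distinct elements differing by at least `2`
(regularity), and all elements `< 2(k+q−1)` — equals `C(q+k−1, k−1)`. -/
theorem card_special_k_partitions (k q : ℕ) (hk : 1 ≤ k) :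
    {s : Finset ℕ | s.card = q ∧ (∀ i ∈ s, k ≤ i) ∧
        (∀ a ∈ s, ∀ b ∈ s, a < b → a + 2 ≤ b) ∧
        (∀ i ∈ s, i < 2 * (k + q - 1))}.ncard
      = Nat.choose (q + k - 1) (k - 1) := by
  classical
  rcases Nat.eq_zero_or_pos q with rfl | hq
  · have hset : {s : Finset ℕ | s.card = 0 ∧ (∀ i ∈ s, k ≤ i) ∧
        (∀ a ∈ s, ∀ b ∈ s, a < b → a + 2 ≤ b) ∧
        (∀ i ∈ s, i < 2 * (k + 0 - 1))} = {(∅ : Finset ℕ)} := by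
      ext s
      simp only [Set.mem_setOf_eq, Set.mem_singleton_iff, Finset.card_eq_zero]
      constructor
      · rintro ⟨h, _⟩; exact h
      · rintro rfl; exact ⟨rfl, by simp, by simp, by simp⟩
    rw [hset, Set.ncard_singleton, show 0 + k - 1 = k - 1 by omega, Nat.choose_self]
  · set N := 2 * (k + q - 1) with hN
    have hNk : k < N := by omega
    set F := (Finset.range N).powerset.filter
      (fun s => s.card = q ∧ (∀ i ∈ s, k ≤ i) ∧ ∀ a ∈ s, ∀ b ∈ s, a < b → a + 2 ≤ b)
      with hF
    have hset : {s : Finset ℕ | s.card = q ∧ (∀ i ∈ s, k ≤ i) ∧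
        (∀ a ∈ s, ∀ b ∈ s, a < b → a + 2 ≤ b) ∧
        (∀ i ∈ s, i < N)} = ↑F := by
      ext s
      simp only [Set.mem_setOf_eq, hF, Finset.coe_filter, Finset.mem_powerset,
        Finset.subset_iff, Finset.mem_range]
      tauto
    rw [hset, Set.ncard_coe_finset]
    have hcard : F.card = ((Finset.range (N - k)).powerset.filter
        (fun t => t.card = q ∧ ∀ a ∈ t, ∀ b ∈ t, a < b → a + 2 ≤ b)).card := by
      apply Finset.card_nbij' (i := fun s => s.image (· - k)) (j := fun t => t.image (· + k))
      · intro s hs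
        simp only [hF, Finset.mem_coe, Finset.mem_filter, Finset.mem_powerset] at hs ⊢
        obtain ⟨hsub, hcard, hlow, hgap⟩ := hs
        refine ⟨?_, ?_, ?_⟩
        · intro x hx
          obtain ⟨i, hi, rfl⟩ := Finset.mem_image.1 hx
          have h1 := Finset.mem_range.1 (hsub hi)
          have h2 := hlow i hi
          exact Finset.mem_range.2 (by omega)
        · rw [Finset.card_image_of_injOn, hcard]
          intro a ha b hb hab
          have hab' : a - k = b - k := hab
          have := hlow a ha; have := hlow b hb; omega
        · intro a ha b hb hab
          obtain ⟨i, hi, rfl⟩ := Finset.mem_image.1 ha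
          obtain ⟨j, hj, rfl⟩ := Finset.mem_image.1 hb
          have hik := hlow i hi
          have hjk := hlow j hj
          have hab' : i - k < j - k := hab
          have hij : i < j := by omega
          have := hgap i hi j hj hij
          omega
      · intro t ht
        simp only [hF, Finset.mem_coe, Finset.mem_filter, Finset.mem_powerset] at ht ⊢
        obtain ⟨hsub, hcard, hgap⟩ := ht
        refine ⟨?_, ?_, ?_, ?_⟩
        · intro x hx
          obtain ⟨i, hi, rfl⟩ := Finset.mem_image.1 hx
          have := Finset.mem_range.1 (hsub hi)
          exact Finset.mem_range.2 (by omega)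
        · rw [Finset.card_image_of_injective _ (add_left_injective k), hcard]
        · intro x hx
          obtain ⟨i, hi, rfl⟩ := Finset.mem_image.1 hx
          omega
        · intro a ha b hb hab
          obtain ⟨i, hi, rfl⟩ := Finset.mem_image.1 ha
          obtain ⟨j, hj, rfl⟩ := Finset.mem_image.1 hb
          have hab' : i + k < j + k := hab
          have hij : i < j := by omega
          have := hgap i hi j hj hij
          omega
      · intro s hs
        simp only [hF, Finset.mem_coe, Finset.mem_filter] at hs
        dsimp only
        rw [Finset.image_image]
        rw [Finset.image_congr (g := id) (fun x hx => by
          have := hs.2.2.1 x hx; simp; omega)]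
        exact Finset.image_id
      · intro t ht
        dsimp only
        rw [Finset.image_image]
        rw [Finset.image_congr (g := id) (fun x hx => by simp)]
        exact Finset.image_id
    rw [hcard, gapCount (N - k) q, show N - k + 1 - q = k + q - 1 by omega]
    have : Nat.choose (k + q - 1) ((k + q - 1) - (k - 1)) = Nat.choose (k + q - 1) (k - 1) :=
      Nat.choose_symm (by omega)
    rw [show (k + q - 1) - (k - 1) = q by omega] at this
    rw [show q + k - 1 = k + q - 1 by omega, this]
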